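/- Let N be a 2-rooted network on X. Then N is proper forest-based if and only if Γ(N) has a bipartite omni-extension (i.e., an omni-extension admitting a proper 2-coloring). -/

import Mathlib

open Classical

noncomputable def outdeg {V : Type*} (A : V → V → Prop) (v : V) : ℕ := {u | A v u}.ncard
noncomputable def indeg {V : Type*} (A : V → V → Prop) (v : V) : ℕ := {u | A u v}.ncard

def Acyclic {V : Type*} (A : V → V → Prop) : Prop := ∀ v : V, ¬ Relation.TransGen A v v

def undirConn {V : Type*} (A : V → V → Prop) : Prop :=
  ∀ u v : V, Relation.ReflTransGen (fun a b => A a b ∨ A b a) u v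

/-- A (multiply rooted) network with leaf set `X`: a semi-binary, connected DAG in which
the leaves (vertices of outdegree 0) are exactly `X` and every root has outdegree ≥ 2. -/
structure IsNetwork {V : Type*} (A : V → V → Prop) (X : Set V) : Prop where
  acyclic : Acyclic A
  conn : undirConn A
  leaves : ∀ v, outdeg A v = 0 ↔ v ∈ X
  roots2 : ∀ v, indeg A v = 0 → 2 ≤ outdeg A v
  semibinary : ∀ v, 2 ≤ indeg A v → indeg A v = 2 ∧ outdeg A v = 1

/-- A (rooted) forest: every vertex has indegree at most one, and there are no directed cycles. -/
def IsForest {V : Type*} (F : V → V → Prop) : Prop := (∀ v, indeg F v ≤ 1) ∧ Acyclic F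

/-- Two vertices lie in the same tree (connected component) of the forest `F`. -/
def sameTree {V : Type*} (F : V → V → Prop) (u v : V) : Prop :=
  Relation.ReflTransGen (fun a b => F a b ∨ F b a) u v

/-- `F` is a subdivision forest for the network `(V,A)` with leaf set `X`: a spanning
subforest with the same leaf set, all non-forest arcs joining distinct trees of `F`. -/
def SubdivForest {V : Type*} (A F : V → V → Prop) (X : Set V) : Prop :=
  (∀ u v, F u v → A u v) ∧ IsForest F ∧
    (∀ v, outdeg F v = 0 ↔ v ∈ X) ∧
    (∀ u v, A u v → ¬ F u v → ¬ sameTree F u v)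

/-- A network is forest-based if it admits a subdivision forest. -/
def ForestBased {V : Type*} (A : V → V → Prop) (X : Set V) : Prop :=
  ∃ F : V → V → Prop, SubdivForest A F X

/-- `g = γ_v`: `g` is the lowest ancestor of `v` lying in `RH(N) = R(N) ∪ H(N)`
(the vertices of indegree ≠ 1), i.e. the directed path from `g` to `v` passes only
through tree vertices (indegree 1) after `g`. -/
def isGamma {V : Type*} (A : V → V → Prop) (g v : V) : Prop :=
  indeg A g ≠ 1 ∧ Relation.ReflTransGen (fun a b => A a b ∧ indeg A b = 1) g v

/-- The graph `Γ(N)` on `RH(N)`: `u` and `v` are joined if some hybrid vertex has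
parents `u'`, `v'` with `γ_{u'} = u` and `γ_{v'} = v`. -/
def GammaN {V : Type*} (A : V → V → Prop) (u v : V) : Prop :=
  ∃ h u' v', 2 ≤ indeg A h ∧ A u' h ∧ A v' h ∧ u' ≠ v' ∧
    isGamma A u u' ∧ isGamma A v v'

/-- An omnian: a non-leaf vertex all of whose children are hybrid vertices. -/
def Omnian {V : Type*} (A : V → V → Prop) (v : V) : Prop :=
  outdeg A v ≠ 0 ∧ ∀ c, A v c → 2 ≤ indeg A c

/-- `E` is an omni-extension of `Γ(N)`: a supergraph of `Γ(N)` on the vertex set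
`RH(N)` such that every omnian `v` has a child `h` with `{γ_u, h}` an edge of `E`,
where `u` is the other parent of `h`. -/
def OmniExt {V : Type*} (A : V → V → Prop) (E : V → V → Prop) : Prop :=
  Symmetric E ∧ (∀ u v, E u v → indeg A u ≠ 1 ∧ indeg A v ≠ 1) ∧
    (∀ u v, GammaN A u v → E u v) ∧
    ∀ v, Omnian A v → ∃ h u g, A v h ∧ 2 ≤ indeg A h ∧ A u h ∧ u ≠ v ∧
      isGamma A g u ∧ E g h

/-- Proper forest-based: forest-based with a base forest having exactly as many
component trees (roots of the subdivision forest) as `N` has roots. -/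
def ProperFB {V : Type*} (A : V → V → Prop) (X : Set V) : Prop :=
  ∃ F : V → V → Prop, SubdivForest A F X ∧
    {v | indeg F v = 0}.ncard = {v | indeg A v = 0}.ncard

section Helpers

variable {V : Type*} [Fintype V] {A : V → V → Prop}

lemma ncard_ne_zero_of_mem {s : Set V} {a : V} (h : a ∈ s) : s.ncard ≠ 0 := by
  have := (Set.ncard_pos (Set.toFinite s)).mpr ⟨a, h⟩; omega

lemma indeg_ne_zero {u v : V} (h : A u v) : indeg A v ≠ 0 :=
  ncard_ne_zero_of_mem (s := {u | A u v}) h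

lemma wfTG (hac : Acyclic A) : WellFounded (Relation.TransGen A) := by
  have : IsTrans V (Relation.TransGen A) := ⟨fun _ _ _ => Relation.TransGen.trans⟩
  have : IsIrrefl V (Relation.TransGen A) := ⟨hac⟩
  exact Finite.wellFounded_of_trans_of_irrefl _

lemma parent_unique {v : V} (h : indeg A v = 1) : ∃ p, A p v ∧ ∀ q, A q v → q = p := by
  obtain ⟨p, hp⟩ := Set.ncard_eq_one.mp h
  refine ⟨p, ?_, fun q hq => ?_⟩
  · have : p ∈ {u | A u v} := hp ▸ rfl; exact this
  · have : q ∈ ({p} : Set V) := hp ▸ hq; exact this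

lemma parents_pair {u u' v : V} (hu : A u v) (hu' : A u' v) (hne : u ≠ u')
    (h2 : indeg A v = 2) : ∀ w, A w v → w = u ∨ w = u' := by
  have hsub : ({u, u'} : Set V) ⊆ {w | A w v} := by
    rintro w (rfl | rfl) <;> assumption
  have : ({u, u'} : Set V) = {w | A w v} := by
    apply Set.eq_of_subset_of_ncard_le hsub
    rw [Set.ncard_pair hne, show {w | A w v}.ncard = indeg A v from rfl, h2]
  intro w hw
  have : w ∈ ({u, u'} : Set V) := this ▸ hw
  exact this

lemma gamma_exists (hac : Acyclic A) (v : V) : ∃ g, isGamma A g v := by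
  induction v using (wfTG hac).induction with
  | _ v ih =>
    by_cases h1 : indeg A v = 1
    · obtain ⟨p, hp, -⟩ := parent_unique h1
      obtain ⟨g, hg1, hg2⟩ := ih p (Relation.TransGen.single hp)
      exact ⟨g, hg1, hg2.tail ⟨hp, h1⟩⟩
    · exact ⟨v, h1, Relation.ReflTransGen.refl⟩

lemma gamma_unique (hac : Acyclic A) (v : V) :
    ∀ g g', isGamma A g v → isGamma A g' v → g = g' := by
  induction v using (wfTG hac).induction with
  | _ v ih =>
    intro g g' ⟨hg1, hg2⟩ ⟨hg1', hg2'⟩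
    by_cases h1 : indeg A v = 1
    · obtain ⟨p, hp, hup⟩ := parent_unique h1
      rcases hg2.cases_tail with rfl | ⟨c, hc, hcv, -⟩
      · exact absurd h1 hg1
      · rcases hg2'.cases_tail with rfl | ⟨c', hc', hcv', -⟩
        · exact absurd h1 hg1'
        · have hcp : c = p := hup c hcv
          have hcp' : c' = p := hup c' hcv'
          rw [hcp] at hc; rw [hcp'] at hc'
          exact ih p (Relation.TransGen.single hp) g g' ⟨hg1, hc⟩ ⟨hg1', hc'⟩
    · rcases hg2.cases_tail with rfl | ⟨c, -, -, hcv⟩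
      · rcases hg2'.cases_tail with rfl | ⟨c', -, -, hcv'⟩
        · rfl
        · exact absurd hcv' h1
      · exact absurd hcv h1

lemma isGamma_step {g a b : V} (h : isGamma A g a) (hab : A a b) (h1 : indeg A b = 1) :
    isGamma A g b := ⟨h.1, h.2.tail ⟨hab, h1⟩⟩

lemma isGamma_self {v : V} (h : indeg A v ≠ 1) : isGamma A v v := ⟨h, Relation.ReflTransGen.refl⟩

lemma indeg_mono {F : V → V → Prop} (hFA : ∀ u v, F u v → A u v) (v : V) :
    indeg F v ≤ indeg A v :=
  Set.ncard_le_ncard (fun u hu => hFA u v hu) (Set.toFinite _)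

lemma bool_trichotomy (a b c : Bool) (h : a ≠ b) : a = c ∨ b = c := by
  revert h; revert a b c; decide

end Helpers

section Dirs

variable {V : Type*} [Fintype V] {A : V → V → Prop} {X : Set V}

lemma sameTree_symm {F : V → V → Prop} {u v : V} (h : sameTree F u v) : sameTree F v u := by
  induction h with
  | refl => exact Relation.ReflTransGen.refl
  | tail _ hstep ih => exact Relation.ReflTransGen.head (Or.symm hstep) ih

lemma sameTree_of_arc {F : V → V → Prop} {u v : V} (h : F u v) : sameTree F u v :=
  Relation.ReflTransGen.single (Or.inl h)

lemma forward_dir (hnet : IsNetwork A X) (hroots : {v | indeg A v = 0}.ncard = 2)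
    (hPFB : ProperFB A X) :
    ∃ E : V → V → Prop, OmniExt A E ∧ ∃ σ : V → Bool, ∀ u v, E u v → σ u ≠ σ v := by
  obtain ⟨F, ⟨hFA, ⟨hFdeg, hFac⟩, hFleaf, hFcross⟩, hcard⟩ := hPFB
  -- roots of F = roots of A
  have rootsEq : {v | indeg A v = 0} = {v | indeg F v = 0} := by
    apply Set.eq_of_subset_of_ncard_le
    · intro v hv
      have := indeg_mono hFA v
      simp only [Set.mem_setOf_eq] at hv ⊢; omega
    · rw [hcard]
    · exact Set.toFinite _
  -- arcs into tree vertices are in F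
  have treeArc : ∀ u v, A u v → indeg A v = 1 → F u v := by
    intro u v huv h1
    by_contra hnF
    obtain ⟨p, hp, hup⟩ := parent_unique h1
    have hFe : {q | F q v} = ∅ := by
      ext q; simp only [Set.mem_setOf_eq, Set.mem_empty_iff_false, iff_false]
      intro hq
      have : q = p := hup q (hFA q v hq)
      subst this
      have : u = q := hup u huv
      exact hnF (this ▸ hq)
    have hF0 : indeg F v = 0 := by rw [indeg, hFe, Set.ncard_empty]
    have : v ∈ {v | indeg A v = 0} := rootsEq ▸ (hF0 : v ∈ {v | indeg F v = 0})
    simp only [Set.mem_setOf_eq] at this; omega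
  -- every vertex is in the tree of some A-root
  have hFacyc : Acyclic F := fun v hv =>
    hnet.acyclic v (hv.lift id (fun a b => hFA a b))
  have reach : ∀ v : V, ∃ r, indeg A r = 0 ∧ sameTree F r v := by
    intro v
    induction v using (wfTG hFacyc).induction with
    | _ v ih =>
      by_cases h0 : indeg F v = 0
      · refine ⟨v, ?_, Relation.ReflTransGen.refl⟩
        have : v ∈ {v | indeg A v = 0} := rootsEq ▸ (h0 : v ∈ {v | indeg F v = 0})
        exact this
      · obtain ⟨p, hp⟩ := Set.nonempty_of_ncard_ne_zero h0
        obtain ⟨r, hr0, hrp⟩ := ih p (Relation.TransGen.single hp)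
        exact ⟨r, hr0, hrp.trans (sameTree_of_arc hp)⟩
  obtain ⟨r1, r2, hr12, hrset⟩ := Set.ncard_eq_two.mp hroots
  -- the coloring
  set σ : V → Bool := fun v => decide (sameTree F r1 v) with hσ
  have σ_eq : ∀ u v, sameTree F u v → σ u = σ v := by
    intro u v h
    simp only [hσ, decide_eq_decide]
    exact ⟨fun h' => h'.trans h, fun h' => h'.trans (sameTree_symm h)⟩
  have σ_ne : ∀ u v, ¬ sameTree F u v → σ u ≠ σ v := by
    intro u v h hcon
    simp only [hσ, decide_eq_decide] at hcon
    obtain ⟨r, hr0, hru⟩ := reach u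
    obtain ⟨r', hr0', hrv⟩ := reach v
    by_cases h1 : sameTree F r1 u
    · exact h (((sameTree_symm h1).trans (hcon.mp h1)))
    · have h1' : ¬ sameTree F r1 v := fun hc => h1 (hcon.mpr hc)
      have hru2 : r = r2 := by
        have : r ∈ ({r1, r2} : Set V) := hrset ▸ (hr0 : r ∈ {v | indeg A v = 0})
        rcases this with rfl | rfl
        · exact absurd hru h1
        · rfl
      have hrv2 : r' = r2 := by
        have : r' ∈ ({r1, r2} : Set V) := hrset ▸ (hr0' : r' ∈ {v | indeg A v = 0})
        rcases this with rfl | rfl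
        · exact absurd hrv h1'
        · rfl
      subst hru2; subst hrv2
      exact h ((sameTree_symm hru).trans hrv)
  have σ_gamma : ∀ g v, isGamma A g v → σ g = σ v := by
    rintro g v ⟨-, hchain⟩
    induction hchain with
    | refl => rfl
    | tail _ hstep ih => exact ih.trans (σ_eq _ _ (sameTree_of_arc (treeArc _ _ hstep.1 hstep.2)))
  -- not both parents of a hybrid in F
  have notBoth : ∀ u' v' h, A u' h → A v' h → u' ≠ v' → F u' h → F v' h → False := by
    intro u' v' h hu hv hne hFu hFv
    have hsub : ({u', v'} : Set V) ⊆ {q | F q h} := by rintro w (rfl | rfl) <;> assumption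
    have := Set.ncard_le_ncard hsub (Set.toFinite _)
    rw [Set.ncard_pair hne] at this
    have := hFdeg h
    rw [indeg] at this
    omega
  -- cross-color for non-forest parent arcs
  have crossNe : ∀ u' h, A u' h → ¬ F u' h → σ u' ≠ σ h := fun u' h hA hnF =>
    σ_ne _ _ (hFcross u' h hA hnF)
  refine ⟨fun u v => indeg A u ≠ 1 ∧ indeg A v ≠ 1 ∧ σ u ≠ σ v, ⟨?_, ?_, ?_, ?_⟩, σ, ?_⟩
  · intro u v ⟨h1, h2, h3⟩; exact ⟨h2, h1, h3.symm⟩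
  · rintro u v ⟨h1, h2, -⟩; exact ⟨h1, h2⟩
  · rintro u v ⟨h, u', v', hdeg, hu', hv', hne, hgu, hgv⟩
    refine ⟨hgu.1, hgv.1, ?_⟩
    rw [σ_gamma _ _ hgu, σ_gamma _ _ hgv]
    by_cases hFu : F u' h
    · have hnFv : ¬ F v' h := fun hc => notBoth u' v' h hu' hv' hne hFu hc
      rw [σ_eq _ _ (sameTree_of_arc hFu)]
      exact fun hc => crossNe v' h hv' hnFv hc.symm
    · by_cases hFv : F v' h
      · rw [σ_eq (v') h (sameTree_of_arc hFv)]
        exact crossNe u' h hu' hFu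
      · exfalso
        have h2 : indeg A h = 2 := (hnet.semibinary h hdeg).1
        have hFe : {q | F q h} = ∅ := by
          ext q; simp only [Set.mem_setOf_eq, Set.mem_empty_iff_false, iff_false]
          intro hq
          rcases parents_pair hu' hv' hne h2 q (hFA q h hq) with rfl | rfl
          · exact hFu hq
          · exact hFv hq
        have hF0 : indeg F h = 0 := by rw [indeg, hFe, Set.ncard_empty]
        have : h ∈ {v | indeg A v = 0} := rootsEq ▸ (hF0 : h ∈ {v | indeg F v = 0})
        simp only [Set.mem_setOf_eq] at this; omega
  · rintro v ⟨hvout, hvhyb⟩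
    have hvX : v ∉ X := fun hc => hvout ((hnet.leaves v).mpr hc)
    have hFout : outdeg F v ≠ 0 := fun hc => hvX ((hFleaf v).mp hc)
    obtain ⟨h, hFh⟩ := Set.nonempty_of_ncard_ne_zero hFout
    have hAh : A v h := hFA v h hFh
    have hhyb : 2 ≤ indeg A h := hvhyb h hAh
    have h2 : indeg A h = 2 := (hnet.semibinary h hhyb).1
    obtain ⟨a, b, hab, habset⟩ := Set.ncard_eq_two.mp h2
    have hva : v ∈ ({a, b} : Set V) := habset ▸ (hAh : v ∈ {u | A u h})
    have hmem : ∀ w, w ∈ ({a,b} : Set V) → A w h := by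
      intro w hw
      have : w ∈ {u | A u h} := habset ▸ hw
      exact this
    obtain ⟨u, hu, huv⟩ : ∃ u, A u h ∧ u ≠ v := by
      rcases hva with rfl | rfl
      · exact ⟨b, hmem b (Or.inr rfl), fun hc => hab hc.symm⟩
      · exact ⟨a, hmem a (Or.inl rfl), hab⟩
    obtain ⟨g, hg⟩ := gamma_exists hnet.acyclic u
    have hnFu : ¬ F u h := fun hc => notBoth u v h hu hAh huv hc hFh
    refine ⟨h, u, g, hAh, hhyb, hu, huv, hg, hg.1, by omega, ?_⟩
    rw [σ_gamma _ _ hg]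
    exact crossNe u h hu hnFu
  · rintro u v ⟨-, -, h⟩; exact h

end Dirs

section Back

variable {V : Type*} [Fintype V] {A : V → V → Prop} {X : Set V}

lemma backward_dir (hnet : IsNetwork A X) (E : V → V → Prop) (hE : OmniExt A E)
    (σ : V → Bool) (hcol : ∀ u v, E u v → σ u ≠ σ v) : ProperFB A X := by
  obtain ⟨hEsym, hEdeg, hEGamma, hEomni⟩ := hE
  have hac := hnet.acyclic
  -- the candidate forest
  set F : V → V → Prop :=
    fun u v => A u v ∧ (indeg A v ≤ 1 ∨ ∃ g, isGamma A g u ∧ σ g = σ v) with hFdef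
  have hFA : ∀ u v, F u v → A u v := fun u v h => h.1
  -- gammas of distinct parents of a hybrid get distinct colors
  have gammaNe : ∀ h u' v' g1 g2, 2 ≤ indeg A h → A u' h → A v' h → u' ≠ v' →
      isGamma A g1 u' → isGamma A g2 v' → σ g1 ≠ σ g2 := by
    intro h u' v' g1 g2 hdeg hu hv hne hg1 hg2
    exact hcol _ _ (hEGamma g1 g2 ⟨h, u', v', hdeg, hu, hv, hne, hg1, hg2⟩)
  -- at most one parent arc of a hybrid is kept
  have keptUnique : ∀ h u' v', 2 ≤ indeg A h → A u' h → A v' h → u' ≠ v' →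
      F u' h → F v' h → False := by
    intro h u' v' hdeg hu hv hne hFu hFv
    have h1 : ¬ indeg A h ≤ 1 := by omega
    rcases hFu.2 with hc | ⟨g1, hg1, hs1⟩
    · exact h1 hc
    rcases hFv.2 with hc | ⟨g2, hg2, hs2⟩
    · exact h1 hc
    exact gammaNe h u' v' g1 g2 hdeg hu hv hne hg1 hg2 (hs1.trans hs2.symm)
  -- hybrids: exactly the two distinct parents, one is kept
  have hybridParents : ∀ h, 2 ≤ indeg A h → ∃ u' v', u' ≠ v' ∧ A u' h ∧ A v' h ∧
      ({u | A u h} = {u', v'}) := by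
    intro h hdeg
    have h2 : indeg A h = 2 := (hnet.semibinary h hdeg).1
    obtain ⟨a, b, hab, hset⟩ := Set.ncard_eq_two.mp h2
    refine ⟨a, b, hab, ?_, ?_, hset⟩
    · exact (hset ▸ (Or.inl rfl : a ∈ ({a, b} : Set V)) : a ∈ {u | A u h})
    · exact (hset ▸ (Or.inr rfl : b ∈ ({a, b} : Set V)) : b ∈ {u | A u h})
  have keptExists : ∀ h, 2 ≤ indeg A h → ∃ p, F p h := by
    intro h hdeg
    obtain ⟨u', v', hne, hu, hv, -⟩ := hybridParents h hdeg
    obtain ⟨g1, hg1⟩ := gamma_exists hac u'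
    obtain ⟨g2, hg2⟩ := gamma_exists hac v'
    rcases bool_trichotomy (σ g1) (σ g2) (σ h)
        (gammaNe h u' v' g1 g2 hdeg hu hv hne hg1 hg2) with hs | hs
    · exact ⟨u', hu, Or.inr ⟨g1, hg1, hs⟩⟩
    · exact ⟨v', hv, Or.inr ⟨g2, hg2, hs⟩⟩
  -- indegree bounds for F
  have hFdeg : ∀ v, indeg F v ≤ 1 := by
    intro v
    rcases Nat.lt_or_ge (indeg A v) 2 with hlt | hge
    · have := indeg_mono hFA v; omega
    · obtain ⟨u', v', hne, hu, hv, hset⟩ := hybridParents v hge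
      by_cases hFu : F u' v
      · have hsub : {q | F q v} ⊆ {u'} := by
          intro q hq
          have : q ∈ ({u', v'} : Set V) := hset ▸ (hFA q v hq : q ∈ {u | A u v})
          rcases this with rfl | rfl
          · rfl
          · exact absurd (keptUnique v u' q hge hu hv hne hFu hq) not_false
        have := Set.ncard_le_ncard hsub (Set.toFinite _)
        simpa [indeg] using this
      · have hsub : {q | F q v} ⊆ {v'} := by
          intro q hq
          have : q ∈ ({u', v'} : Set V) := hset ▸ (hFA q v hq : q ∈ {u | A u v})
          rcases this with rfl | rfl
          · exact absurd hq hFu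
          · rfl
        have := Set.ncard_le_ncard hsub (Set.toFinite _)
        simpa [indeg] using this
  have hFac : Acyclic F := fun v hv => hac v (hv.lift id (fun a b (h : F a b) => h.1))
  -- roots of F = roots of A
  have rootsEq : {v | indeg F v = 0} = {v | indeg A v = 0} := by
    ext v
    simp only [Set.mem_setOf_eq]
    constructor
    · intro h0
      by_contra hA0
      rcases Nat.lt_or_ge (indeg A v) 2 with hlt | hge
      · have h1 : indeg A v = 1 := by omega
        obtain ⟨p, hp, -⟩ := parent_unique h1
        have : F p v := ⟨hp, Or.inl (by omega)⟩
        exact indeg_ne_zero this h0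
      · obtain ⟨p, hp⟩ := keptExists v hge
        exact indeg_ne_zero hp h0
    · intro h0
      have : {q | F q v} = ∅ := by
        ext q
        simp only [Set.mem_setOf_eq, Set.mem_empty_iff_false, iff_false]
        intro hq
        exact indeg_ne_zero (hFA q v hq) h0
      rw [indeg, this, Set.ncard_empty]
  -- the canonical gamma and induced coloring
  have γex := gamma_exists hac (A := A)
  set σh : V → Bool := fun v => σ (Classical.choose (γex v)) with hσh
  have γspec : ∀ v, isGamma A (Classical.choose (γex v)) v := fun v => Classical.choose_spec (γex v)
  have σh_eq : ∀ v g, isGamma A g v → σh v = σ g := by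
    intro v g hg
    simp only [hσh]
    rw [gamma_unique hac v _ g (γspec v) hg]
  -- F-steps preserve σh
  have stepEq : ∀ a b, F a b → σh a = σh b := by
    rintro a b ⟨hab, hrest⟩
    rcases Nat.lt_or_ge (indeg A b) 2 with hlt | hge
    · have h1 : indeg A b = 1 := by
        have := indeg_ne_zero hab; omega
      rw [σh_eq b (Classical.choose (γex a)) (isGamma_step (γspec a) hab h1)]
    · rcases hrest with hc | ⟨g, hg, hs⟩
      · omega
      · rw [σh_eq a g hg, σh_eq b b (isGamma_self (by omega)), hs]
  have treeEq : ∀ u v, sameTree F u v → σh u = σh v := by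
    intro u v h
    induction h with
    | refl => rfl
    | tail _ hstep ih =>
      rcases hstep with hstep | hstep
      · exact ih.trans (stepEq _ _ hstep)
      · exact ih.trans (stepEq _ _ hstep).symm
  refine ⟨F, ⟨hFA, ⟨hFdeg, hFac⟩, ?_, ?_⟩, by rw [rootsEq]⟩
  · -- leaves
    intro v
    constructor
    · intro h0
      by_contra hvX
      have hout : outdeg A v ≠ 0 := fun hc => hvX ((hnet.leaves v).mp hc)
      by_cases homni : Omnian A v
      · obtain ⟨h, u, g, hvh, hdeg, huh, hune, hgu, hEgh⟩ := hEomni v homni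
        obtain ⟨g', hg'⟩ := gamma_exists hac v
        have hGam : GammaN A g g' := ⟨h, u, v, hdeg, huh, hvh, hune, hgu, hg'⟩
        have h1 : σ g ≠ σ g' := hcol _ _ (hEGamma _ _ hGam)
        have h2 : σ g ≠ σ h := hcol _ _ hEgh
        have hs : σ g' = σ h := by
          rcases bool_trichotomy (σ g) (σ g') (σ h) h1 with hs | hs
          · exact absurd hs h2
          · exact hs
        have : F v h := ⟨hvh, Or.inr ⟨g', hg', hs⟩⟩
        exact indeg_ne_zero (A := fun a b => F b a) (v := v) (u := h) this h0
      · simp only [Omnian, not_and, not_forall] at homni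
        obtain ⟨c, hc, hcdeg⟩ := homni hout
        have : F v c := ⟨hc, Or.inl (by omega)⟩
        exact indeg_ne_zero (A := fun a b => F b a) (v := v) (u := c) this h0
    · intro hvX
      have hout : outdeg A v = 0 := (hnet.leaves v).mpr hvX
      have : {u | F v u} = ∅ := by
        ext q
        simp only [Set.mem_setOf_eq, Set.mem_empty_iff_false, iff_false]
        intro hq
        exact ncard_ne_zero_of_mem (s := {u | A v u}) (hFA v q hq) hout
      rw [outdeg, this, Set.ncard_empty]
  · -- cross arcs join different trees
    intro u v hAuv hnF hsame
    simp only [hFdef, not_and, not_or, not_le, not_exists] at hnF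
    obtain ⟨hdeg, hng⟩ := hnF hAuv
    have h1 : σh u ≠ σh v := by
      rw [σh_eq v v (isGamma_self (by omega)), σh_eq u (Classical.choose (γex u)) (γspec u)]
      have := hng (Classical.choose (γex u))
      exact this (γspec u)
    exact h1 (treeEq u v hsame)

end Back

/-- a 2-rooted network is proper forest-based iff `Γ(N)` has a
bipartite omni-extension (one admitting a proper 2-coloring). -/
theorem stmt14 {V : Type*} [Fintype V] (A : V → V → Prop) (X : Set V)
    (hnet : IsNetwork A X) (hroots : {v | indeg A v = 0}.ncard = 2) :
    ProperFB A X ↔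
      ∃ E : V → V → Prop, OmniExt A E ∧
        ∃ σ : V → Bool, ∀ u v, E u v → σ u ≠ σ v := by
  constructor
  · exact forward_dir hnet hroots
  · rintro ⟨E, hE, σ, hσ⟩
    exact backward_dir hnet E hE σ hσ
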